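/- Let g : ℝ^d → ℝ be a bounded measurable function. Then E[g(X⁻)] = 2·E[(1 − F_Y(Y))·g(X)]. -/

import Mathlib

open MeasureTheory ProbabilityTheory

/-- For a bounded measurable `g`, `E[g(X⁻)] = 2 E[(1 - F_Y(Y)) g(X)]`. -/
theorem stmt_1
    {Ω : Type*} [MeasurableSpace Ω] {μ : Measure Ω} [IsProbabilityMeasure μ]
    {d : ℕ} {X X' : Ω → (Fin d → ℝ)} {Y Y' : Ω → ℝ}
    (hX : Measurable X) (hY : Measurable Y) (hX' : Measurable X') (hY' : Measurable Y')
    (hindep : IndepFun (fun ω => (X ω, Y ω)) (fun ω => (X' ω, Y' ω)) μ)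
    (hident : μ.map (fun ω => (X ω, Y ω)) = μ.map (fun ω => (X' ω, Y' ω)))
    (hatomless : ∀ t : ℝ, μ {ω | Y ω = t} = 0)
    (g : (Fin d → ℝ) → ℝ) (hg : Measurable g)
    (M : ℝ) (hgM : ∀ x, |g x| ≤ M) :
    ∫ ω, g (if Y' ω ≤ Y ω then X' ω else X ω) ∂μ
      = 2 * ∫ ω, (1 - (μ {ω' | Y ω' ≤ Y ω}).toReal) * g (X ω) ∂μ := by
  classical
  have hM0 : 0 ≤ M := le_trans (abs_nonneg _) (hgM 0)
  have hmapXY : Measurable fun ω => (X ω, Y ω) := hX.prodMk hY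
  have hmapXY' : Measurable fun ω => (X' ω, Y' ω) := hX'.prodMk hY'
  set ν : Measure ((Fin d → ℝ) × ℝ) := μ.map (fun ω => (X ω, Y ω)) with hνdef
  have hνprob : IsProbabilityMeasure ν := Measure.isProbabilityMeasure_map hmapXY.aemeasurable
  set F : ℝ → ℝ := fun t => (μ {ω' | Y ω' ≤ t}).toReal with hFdef
  have hFmono : Monotone F := by
    intro s t hst
    exact ENNReal.toReal_mono (measure_ne_top _ _)
      (measure_mono (fun ω h => le_trans h hst))
  have hFmeas : Measurable F := hFmono.measurable
  -- measure computations
  have hcompl : ∀ t : ℝ, (μ {ω | Y ω ≤ t}ᶜ).toReal = 1 - F t := by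
    intro t
    rw [prob_compl_eq_one_sub (measurableSet_le hY measurable_const)]
    rw [ENNReal.toReal_sub_of_le prob_le_one ENNReal.one_ne_top, ENNReal.toReal_one]
  have hν_gt : ∀ t : ℝ, (ν {a | t < a.2}).toReal = 1 - F t := by
    intro t
    rw [hνdef, Measure.map_apply hmapXY (measurableSet_lt measurable_const measurable_snd)]
    have : (fun ω => (X ω, Y ω)) ⁻¹' {a | t < a.2} = {ω | Y ω ≤ t}ᶜ := by
      ext ω; simp [not_le]
    rw [this, hcompl]
  have hν_ge : ∀ t : ℝ, (ν {a | t ≤ a.2}).toReal = 1 - F t := by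
    intro t
    have h1 : ν {a | t ≤ a.2} = ν {a | t < a.2} := by
      apply le_antisymm
      · have hsub : {a : (Fin d → ℝ) × ℝ | t ≤ a.2} ⊆ {a | t < a.2} ∪ {a | a.2 = t} := by
          intro a ha
          rcases lt_or_eq_of_le (show t ≤ a.2 from ha) with h | h
          · exact Or.inl h
          · exact Or.inr h.symm
        calc ν {a | t ≤ a.2} ≤ ν ({a | t < a.2} ∪ {a | a.2 = t}) := measure_mono hsub
          _ ≤ ν {a | t < a.2} + ν {a | a.2 = t} := measure_union_le _ _
          _ = ν {a | t < a.2} := by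
              have : ν {a | a.2 = t} = 0 := by
                rw [hνdef, Measure.map_apply hmapXY
                  (measurableSet_eq_fun measurable_snd measurable_const)]
                exact hatomless t
              rw [this, add_zero]
      · exact measure_mono (fun a (h : t < a.2) => le_of_lt h)
    rw [h1, hν_gt]
  -- joint law
  have hjoint : μ.map (fun ω => ((X ω, Y ω), (X' ω, Y' ω))) = ν.prod ν := by
    rw [(indepFun_iff_map_prod_eq_prod_map_map hmapXY.aemeasurable
      hmapXY'.aemeasurable).mp hindep, ← hident]
  -- the integrands on the product space
  set A : ((Fin d → ℝ) × ℝ) × ((Fin d → ℝ) × ℝ) → ℝ :=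
    fun p => if p.2.2 ≤ p.1.2 then g p.2.1 else 0 with hAdef
  set B : ((Fin d → ℝ) × ℝ) × ((Fin d → ℝ) × ℝ) → ℝ :=
    fun p => if p.2.2 ≤ p.1.2 then 0 else g p.1.1 with hBdef
  have hSmeas : MeasurableSet {p : ((Fin d → ℝ) × ℝ) × ((Fin d → ℝ) × ℝ) | p.2.2 ≤ p.1.2} :=
    measurableSet_le (measurable_snd.comp measurable_snd) (measurable_snd.comp measurable_fst)
  have hAmeas : Measurable A :=
    Measurable.ite hSmeas (hg.comp (measurable_fst.comp measurable_snd)) measurable_const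
  have hBmeas : Measurable B :=
    Measurable.ite hSmeas measurable_const (hg.comp (measurable_fst.comp measurable_fst))
  have hGmeas : Measurable (fun p : ((Fin d → ℝ) × ℝ) × ((Fin d → ℝ) × ℝ) =>
      g (if p.2.2 ≤ p.1.2 then p.2.1 else p.1.1)) :=
    hg.comp (Measurable.ite hSmeas (measurable_fst.comp measurable_snd)
      (measurable_fst.comp measurable_fst))
  have hAint : Integrable A (ν.prod ν) := by
    refine Integrable.mono' (integrable_const M) hAmeas.aestronglyMeasurable
      (Filter.Eventually.of_forall fun p => ?_)
    rw [Real.norm_eq_abs, hAdef]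
    dsimp only
    split_ifs
    · exact hgM _
    · simpa using hM0
  have hBint : Integrable B (ν.prod ν) := by
    refine Integrable.mono' (integrable_const M) hBmeas.aestronglyMeasurable
      (Filter.Eventually.of_forall fun p => ?_)
    rw [Real.norm_eq_abs, hBdef]
    dsimp only
    split_ifs
    · simpa using hM0
    · exact hgM _
  -- step 1: rewrite LHS as an integral over ν.prod ν
  have hLHS : (∫ ω, g (if Y' ω ≤ Y ω then X' ω else X ω) ∂μ)
      = ∫ p, g (if p.2.2 ≤ p.1.2 then p.2.1 else p.1.1) ∂(ν.prod ν) := by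
    rw [← hjoint, integral_map (hmapXY.prodMk hmapXY').aemeasurable
      hGmeas.aestronglyMeasurable]
  -- split integrand
  have hsplit : (fun p : ((Fin d → ℝ) × ℝ) × ((Fin d → ℝ) × ℝ) =>
      g (if p.2.2 ≤ p.1.2 then p.2.1 else p.1.1)) = fun p => A p + B p := by
    funext p
    rw [hAdef, hBdef]
    dsimp only
    split_ifs <;> ring
  -- compute ∫ A
  have hintA : ∫ p, A p ∂(ν.prod ν) = ∫ b, (1 - F b.2) * g b.1 ∂ν := by
    rw [integral_prod_symm A hAint]
    congr 1
    funext b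
    have heq : (fun a : (Fin d → ℝ) × ℝ => A (a, b))
        = Set.indicator {a : (Fin d → ℝ) × ℝ | b.2 ≤ a.2} (fun _ => g b.1) := by
      funext a
      rw [hAdef, Set.indicator_apply]
      rfl
    rw [heq, integral_indicator_const _ (measurableSet_le measurable_const measurable_snd),
      smul_eq_mul, measureReal_def, hν_ge]
  -- compute ∫ B
  have hintB : ∫ p, B p ∂(ν.prod ν) = ∫ a, (1 - F a.2) * g a.1 ∂ν := by
    rw [integral_prod B hBint]
    congr 1
    funext a
    have heq : (fun b : (Fin d → ℝ) × ℝ => B (a, b))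
        = Set.indicator {b : (Fin d → ℝ) × ℝ | a.2 < b.2} (fun _ => g a.1) := by
      funext b
      by_cases h : b.2 ≤ a.2
      · simp [hBdef, Set.indicator_apply, h, not_lt.mpr h]
      · simp [hBdef, Set.indicator_apply, h, not_le.mp h]
    rw [heq, integral_indicator_const _ (measurableSet_lt measurable_const measurable_snd),
      smul_eq_mul, measureReal_def, hν_gt]
  -- map back to μ
  have hback : ∫ b, (1 - F b.2) * g b.1 ∂ν
      = ∫ ω, (1 - F (Y ω)) * g (X ω) ∂μ := by
    have hm : Measurable (fun b : (Fin d → ℝ) × ℝ => (1 - F b.2) * g b.1) :=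
      (measurable_const.sub (hFmeas.comp measurable_snd)).mul (hg.comp measurable_fst)
    rw [hνdef, integral_map hmapXY.aemeasurable hm.aestronglyMeasurable]
  rw [hLHS, hsplit, integral_add hAint hBint, hintA, hintB, hback]
  ring
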